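/- Local expansion of the Rényi entropy at α = 1 (the capacity of entanglement as a slope): let p be a strictly positive probability vector on Fin d (p i > 0 for all i). Then the function α ↦ S α p has derivative at α = 1 equal to -(V p)/2, i.e., HasDerivAt (fun α => S α p) (-(V p)/2) 1. -/

import Mathlib

/-- Rényi entropy of a probability vector `p` on `Fin d`
(Shannon entropy at `α = 1`; powers are `Real.rpow`). -/
noncomputable def S {d : ℕ} (α : ℝ) (p : Fin d → ℝ) : ℝ :=
  if α = 1 then -(∑ i, p i * Real.log (p i))
  else (1 - α)⁻¹ * Real.log (∑ i, (p i) ^ α)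

/-- The capacity of entanglement (varentropy) of a strictly positive
probability vector. -/
noncomputable def V {d : ℕ} (p : Fin d → ℝ) : ℝ :=
  (∑ i, p i * (Real.log (p i)) ^ 2) - (∑ i, p i * Real.log (p i)) ^ 2

open Real Filter Set Topology

section auxRenyi
variable {d : ℕ} (p : Fin d → ℝ)

noncomputable def fA (α : ℝ) : ℝ := ∑ i, (p i) ^ α
noncomputable def fB (α : ℝ) : ℝ := ∑ i, (p i) ^ α * Real.log (p i)
noncomputable def fC (α : ℝ) : ℝ := ∑ i, (p i) ^ α * (Real.log (p i)) ^ 2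

lemma hasDerivAt_fA (hp : ∀ i, 0 < p i) (α : ℝ) : HasDerivAt (fA p) (fB p α) α := by
  apply HasDerivAt.fun_sum
  intro i _
  exact (Real.hasStrictDerivAt_const_rpow (hp i) α).hasDerivAt

lemma hasDerivAt_fB (hp : ∀ i, 0 < p i) (α : ℝ) : HasDerivAt (fB p) (fC p α) α := by
  apply HasDerivAt.fun_sum
  intro i _
  have := ((Real.hasStrictDerivAt_const_rpow (hp i) α).hasDerivAt).mul_const (Real.log (p i))
  simpa [mul_assoc, sq] using this

lemma fA_pos (hp : ∀ i, 0 < p i) (hp1 : ∑ i, p i = 1) (α : ℝ) : 0 < fA p α := by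
  have hd : Finset.univ.Nonempty (α := Fin d) := by
    by_contra h
    rw [Finset.not_nonempty_iff_eq_empty] at h
    simp [h] at hp1
  exact Finset.sum_pos (fun i _ => Real.rpow_pos_of_pos (hp i) α) hd

end auxRenyi

/-- Local expansion of the Rényi entropy at `α = 1`. -/
theorem hasDerivAt_renyi_at_one {d : ℕ} (p : Fin d → ℝ)
    (hp : ∀ i, 0 < p i) (hp1 : ∑ i, p i = 1) :
    HasDerivAt (fun α => S α p) (-(V p) / 2) 1 := by
  set μ : ℝ := ∑ i, p i * Real.log (p i) with hμ
  have hA1 : fA p 1 = 1 := by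
    simp only [fA]
    rw [Finset.sum_congr rfl fun i _ => Real.rpow_one (p i)]
    exact hp1
  have hB1 : fB p 1 = μ := by
    simp only [fB, hμ]
    exact Finset.sum_congr rfl fun i _ => by rw [Real.rpow_one]
  have hC1 : fC p 1 = ∑ i, p i * (Real.log (p i)) ^ 2 := by
    simp only [fC]
    exact Finset.sum_congr rfl fun i _ => by rw [Real.rpow_one]
  have hApos := fA_pos p hp hp1
  -- g and its derivative G
  set g : ℝ → ℝ := fun α => Real.log (fA p α) with hg
  set G : ℝ → ℝ := fun α => fB p α / fA p α with hG
  have hgd : ∀ α, HasDerivAt g (G α) α := fun α =>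
    (hasDerivAt_fA p hp α).log (hApos α).ne'
  have hGd : HasDerivAt G (V p) 1 := by
    have := (hasDerivAt_fB p hp 1).div (hasDerivAt_fA p hp 1) (hApos 1).ne'
    refine this.congr_deriv ?_
    rw [hA1, hB1, hC1]
    simp [V, hμ, sq]
  have hg1 : g 1 = 0 := by rw [hg]; simp [hA1]
  have hG1 : G 1 = μ := by rw [hG]; simp [hA1, hB1]
  -- the functions N and D for l'Hôpital
  set N : ℝ → ℝ := fun α => μ * (α - 1) - g α with hN
  set D : ℝ → ℝ := fun α => (α - 1) ^ 2 with hD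
  have hNd : ∀ α, HasDerivAt N (μ - G α) α := by
    intro α
    have h1 : HasDerivAt (fun α : ℝ => μ * (α - 1)) μ α := by
      simpa using ((hasDerivAt_id α).sub_const 1).const_mul μ
    exact h1.sub (hgd α)
  have hDd : ∀ α : ℝ, HasDerivAt D (2 * (α - 1)) α := by
    intro α
    have h := ((hasDerivAt_id α).sub_const 1).pow 2
    simp [mul_comm] at h
    exact h.congr_deriv (by ring)
  -- slope of G tends to V p
  have hslopeG : Tendsto (slope G 1) (𝓝[≠] 1) (𝓝 (V p)) :=
    hasDerivAt_iff_tendsto_slope.mp hGd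
  have hdiv : Tendsto (fun α => (μ - G α) / (2 * (α - 1))) (𝓝[≠] 1) (𝓝 (-(V p) / 2)) := by
    have h2 : Tendsto (fun α => -(slope G 1 α) / 2) (𝓝[≠] 1) (𝓝 (-(V p) / 2)) := by
      exact (hslopeG.neg).div_const 2
    refine h2.congr' ?_
    filter_upwards [self_mem_nhdsWithin] with α (hα : α ≠ 1)
    have hα1 : α - 1 ≠ 0 := sub_ne_zero.mpr hα
    rw [slope_def_field, hG1, neg_div, div_div, show μ - G α = -(G α - μ) by ring, neg_div,
      mul_comm (α - 1) 2]
  have hNlim : Tendsto N (𝓝[≠] 1) (𝓝 0) := by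
    have : ContinuousAt N 1 := (hNd 1).continuousAt
    have h0 : N 1 = 0 := by simp [hN, hg1]
    exact h0 ▸ (this.continuousWithinAt).tendsto
  have hDlim : Tendsto D (𝓝[≠] 1) (𝓝 0) := by
    have : ContinuousAt D 1 := (hDd 1).continuousAt
    have h0 : D 1 = 0 := by simp [hD]
    exact h0 ▸ (this.continuousWithinAt).tendsto
  have hlhop : Tendsto (fun α => N α / D α) (𝓝[≠] 1) (𝓝 (-(V p) / 2)) := by
    apply HasDerivAt.lhopital_zero_nhdsNE (f' := fun α => μ - G α)
      (g' := fun α => 2 * (α - 1))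
    · exact Eventually.of_forall hNd
    · exact Eventually.of_forall hDd
    · filter_upwards [self_mem_nhdsWithin] with α (hα : α ≠ 1)
      have := sub_ne_zero.mpr hα
      positivity
    · exact hNlim
    · exact hDlim
    · exact hdiv
  -- conclude
  rw [hasDerivAt_iff_tendsto_slope]
  refine hlhop.congr' ?_
  filter_upwards [self_mem_nhdsWithin] with α (hα : α ≠ 1)
  have hα1 : α - 1 ≠ 0 := sub_ne_zero.mpr hα
  have hS : S α p = -(g α) / (α - 1) := by
    simp only [S, if_neg hα, hg, fA]
    rw [show (1 - α)⁻¹ = -(α - 1)⁻¹ by rw [← neg_sub]; exact inv_neg]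
    ring
  have hS1 : S 1 p = -μ := by simp [S, hμ]
  rw [slope_def_field, hS, hS1, hN, hD]
  field_simp
  ring
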